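/- For integers N ≥ 1, n ≥ 0 with n ≤ N, and an element g of Z/NZ of additive order d, the number of subsets S of Z/NZ of size n that are invariant under translation by g equals C(N/d, n/d) if d divides n, and equals 0 otherwise. -/

import Mathlib

open Finset

section helpers

variable {G : Type*} [AddCommGroup G] [Fintype G]

lemma fiber_card_aux (H : AddSubgroup G) (q : G ⧸ H) :
    Nat.card {x : G // (QuotientAddGroup.mk x : G ⧸ H) = q} = Nat.card H := by
  induction q using QuotientAddGroup.induction_on with
  | H y =>
    apply Nat.card_congr
    refine ⟨fun x => ⟨x.1 - y, (QuotientAddGroup.eq_iff_sub_mem).mp x.2⟩,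
      fun h => ⟨h.1 + y, by rw [QuotientAddGroup.eq_iff_sub_mem]; simpa using h.2⟩,
      fun x => ?_, fun h => ?_⟩
    · ext; simp
    · ext; simp

lemma filter_card_aux (H : AddSubgroup G) [DecidableEq (G ⧸ H)] (T : Finset (G ⧸ H)) :
    (univ.filter fun x : G => (QuotientAddGroup.mk x : G ⧸ H) ∈ T).card
      = Nat.card H * T.card := by
  classical
  rw [Finset.card_eq_sum_card_fiberwise
    (f := fun x : G => (QuotientAddGroup.mk x : G ⧸ H)) (t := T)
    (s := univ.filter fun x : G => (QuotientAddGroup.mk x : G ⧸ H) ∈ T)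
    (fun x hx => (mem_filter.mp hx).2)]
  have key : ∀ q ∈ T,
      ((univ.filter fun x : G => (QuotientAddGroup.mk x : G ⧸ H) ∈ T).filter
        fun x => (QuotientAddGroup.mk x : G ⧸ H) = q).card = Nat.card H := by
    intro q hq
    have h1 : ((univ.filter fun x : G => (QuotientAddGroup.mk x : G ⧸ H) ∈ T).filter
        fun x => (QuotientAddGroup.mk x : G ⧸ H) = q)
        = univ.filter fun x : G => (QuotientAddGroup.mk x : G ⧸ H) = q := by
      ext x
      simp only [mem_filter, mem_univ, true_and, and_iff_right_iff_imp]
      intro h; rw [h]; exact hq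
    rw [h1, ← Fintype.card_subtype, ← Nat.card_eq_fintype_card, fiber_card_aux]
  rw [Finset.sum_congr rfl key, Finset.sum_const, smul_eq_mul, mul_comm]

lemma invariant_closed [DecidableEq G] {g : G} {S : Finset G}
    (hS : S.image (fun x => g + x) = S) :
    ∀ x ∈ S, ∀ h ∈ AddSubgroup.zmultiples g, h + x ∈ S := by
  have step : ∀ x ∈ S, g + x ∈ S := fun x hx => by
    rw [← hS]
    exact mem_image_of_mem _ hx
  intro x hx h hh
  rw [← mem_multiples_iff_mem_zmultiples] at hh
  obtain ⟨k, rfl⟩ := hh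
  induction k with
  | zero => simpa using hx
  | succ k ih =>
    have h2 := step _ ih
    have h3 : (k + 1) • g + x = g + (k • g + x) := by
      rw [add_nsmul, one_nsmul]; abel
    rw [h3]; exact h2

lemma invariant_filter [DecidableEq G] {g : G}
    [DecidableEq (G ⧸ AddSubgroup.zmultiples g)] {S : Finset G}
    (hS : S.image (fun x => g + x) = S) :
    (univ.filter fun x : G =>
      (QuotientAddGroup.mk x : G ⧸ AddSubgroup.zmultiples g) ∈
        S.image QuotientAddGroup.mk) = S := by
  ext x
  simp only [mem_filter, mem_univ, true_and, mem_image]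
  constructor
  · rintro ⟨y, hy, hxy⟩
    have h1 : x - y ∈ AddSubgroup.zmultiples g :=
      (QuotientAddGroup.eq_iff_sub_mem).mp hxy.symm
    have h2 := invariant_closed hS y hy _ h1
    simpa using h2
  · intro hx; exact ⟨x, hx, rfl⟩

end helpers

theorem card_fixed_subsets (N n : ℕ) (hN : 0 < N) (hn : n ≤ N) (g : ZMod N) (d : ℕ)
    (hd : addOrderOf g = d) :
    Nat.card {S : Finset (ZMod N) // S.card = n ∧ S.image (fun x => g + x) = S} =
      if d ∣ n then Nat.choose (N / d) (n / d) else 0 := by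
  classical
  haveI : NeZero N := ⟨hN.ne'⟩
  subst hd
  set H : AddSubgroup (ZMod N) := AddSubgroup.zmultiples g with hHdef
  have hdcard : Nat.card H = addOrderOf g := Nat.card_zmultiples g
  have hdpos : 0 < addOrderOf g := addOrderOf_pos g
  have hcardG : Nat.card (ZMod N) = N := by
    simp [Nat.card_eq_fintype_card, ZMod.card]
  have hQ : Nat.card (ZMod N ⧸ H) = N / addOrderOf g := by
    have h := AddSubgroup.card_eq_card_quotient_mul_card_addSubgroup H
    rw [hcardG, hdcard] at h
    exact (Nat.div_eq_of_eq_mul_left hdpos h).symm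
  have e : {S : Finset (ZMod N) // S.card = n ∧ S.image (fun x => g + x) = S} ≃
      {T : Finset (ZMod N ⧸ H) // addOrderOf g * T.card = n} :=
    { toFun := fun S => ⟨S.1.image QuotientAddGroup.mk, by
        obtain ⟨S, hcard, hinv⟩ := S
        have h1 := invariant_filter (g := g) hinv
        have h2 := filter_card_aux H (S.image QuotientAddGroup.mk)
        rw [h1, hcard, hdcard] at h2
        exact h2.symm⟩
      invFun := fun T => ⟨univ.filter fun x =>
          (QuotientAddGroup.mk x : ZMod N ⧸ H) ∈ T.1, by
        constructor
        · rw [filter_card_aux H T.1, hdcard, T.2]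
        · apply Finset.eq_of_subset_of_card_le
          · intro z hz
            simp only [mem_image] at hz
            obtain ⟨x, hx, rfl⟩ := hz
            simp only [mem_filter, mem_univ, true_and] at hx ⊢
            have h4 : (QuotientAddGroup.mk (g + x) : ZMod N ⧸ H)
                = QuotientAddGroup.mk x := by
              rw [QuotientAddGroup.eq_iff_sub_mem]
              have h5 : g + x - x = g := by abel
              rw [h5]
              exact AddSubgroup.mem_zmultiples g
            rw [h4]; exact hx
          · rw [Finset.card_image_of_injective _ (add_right_injective g)]
      ⟩
      left_inv := fun S => by
        ext1
        exact invariant_filter S.2.2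
      right_inv := fun T => by
        ext1
        dsimp only
        ext q
        simp only [mem_image, mem_filter, mem_univ, true_and]
        constructor
        · rintro ⟨x, hx, rfl⟩; exact hx
        · intro hq
          obtain ⟨x, rfl⟩ := QuotientAddGroup.mk_surjective q
          exact ⟨x, hq, rfl⟩ }
  rw [Nat.card_congr e]
  by_cases hdvd : addOrderOf g ∣ n
  · rw [if_pos hdvd]
    obtain ⟨m, rfl⟩ := hdvd
    have e2 : {T : Finset (ZMod N ⧸ H) // addOrderOf g * T.card = addOrderOf g * m} ≃
        {T : Finset (ZMod N ⧸ H) // T.card = m} :=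
      Equiv.subtypeEquivRight fun T =>
        ⟨fun h => Nat.eq_of_mul_eq_mul_left hdpos h, fun h => by rw [h]⟩
    have e3 : {T : Finset (ZMod N ⧸ H) // T.card = m} ≃
        (powersetCard m (univ : Finset (ZMod N ⧸ H)) : Finset (Finset (ZMod N ⧸ H))) :=
      Equiv.subtypeEquivRight fun T => by simp [mem_powersetCard]
    rw [Nat.card_congr e2, Nat.card_congr e3, Nat.card_eq_fintype_card,
      Fintype.card_coe, Finset.card_powersetCard, Finset.card_univ,
      ← Nat.card_eq_fintype_card, hQ, Nat.mul_div_cancel_left m hdpos]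
  · rw [if_neg hdvd]
    exact Nat.card_eq_zero.mpr (Or.inl ⟨fun T => hdvd ⟨T.1.card, T.2.symm⟩⟩)
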